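/- For all (r,m), (s,q) ∈ H = ℤ[1/2] ⋊ ℤ, the elements b⁻¹·(r,m) and b⁻¹·(s,q) of G(1,2) are conjugate in G(1,2) if and only if 2^{q−m}·r = s + 2^q·(q−m) holds in ℤ[1/2]. -/

import Mathlib

/-- The ring of dyadic rationals `ℤ[1/2]`, as a subring of `ℚ`. -/
def Dyadic2 : Subring ℚ := Subring.closure {(2:ℚ)⁻¹}

lemma Dyadic2.two_mem : (2:ℚ) ∈ Dyadic2 := by
  have := add_mem (Subring.one_mem Dyadic2) (Subring.one_mem Dyadic2)
  convert this using 1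
  norm_num

lemma Dyadic2.half_mem : (2:ℚ)⁻¹ ∈ Dyadic2 := Subring.subset_closure rfl

/-- `2` as a unit of `ℤ[1/2]`. -/
def Dyadic2.two : Dyadic2ˣ where
  val := ⟨2, Dyadic2.two_mem⟩
  inv := ⟨(2:ℚ)⁻¹, Dyadic2.half_mem⟩
  val_inv := by ext; norm_num
  inv_val := by ext; norm_num

/-- The powers `2^m` for `m : ℤ`, as elements of `ℤ[1/2]`. -/
def pow2 (m : ℤ) : Dyadic2 := ((Dyadic2.two ^ m : Dyadic2ˣ) : Dyadic2)

lemma pow2_add (m q : ℤ) : pow2 (m + q) = pow2 m * pow2 q := by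
  simp [pow2, zpow_add]

lemma pow2_zero : pow2 0 = 1 := by simp [pow2]

/-- The group `H = ℤ[1/2] ⋊ ℤ`, where `ℤ` acts by powers of `2`;
multiplication is `(r,m)·(s,q) = (r + 2^m·s, m+q)`. -/
@[ext] structure Hgrp where
  r : Dyadic2
  m : ℤ

instance : Mul Hgrp := ⟨fun x y => ⟨x.r + pow2 x.m * y.r, x.m + y.m⟩⟩
instance : One Hgrp := ⟨⟨0, 0⟩⟩
instance : Inv Hgrp := ⟨fun x => ⟨-(pow2 (-x.m) * x.r), -x.m⟩⟩

lemma Hgrp.mul_def (x y : Hgrp) : x * y = ⟨x.r + pow2 x.m * y.r, x.m + y.m⟩ := rfl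
lemma Hgrp.one_def : (1 : Hgrp) = ⟨0, 0⟩ := rfl
lemma Hgrp.inv_def (x : Hgrp) : x⁻¹ = ⟨-(pow2 (-x.m) * x.r), -x.m⟩ := rfl

instance : Group Hgrp where
  mul_assoc a b c := by
    simp only [Hgrp.mul_def, Hgrp.mk.injEq, pow2_add]
    constructor <;> ring
  one_mul a := by
    obtain ⟨r, m⟩ := a
    simp only [Hgrp.one_def, Hgrp.mul_def, Hgrp.mk.injEq, pow2_zero]
    constructor <;> ring
  mul_one a := by
    obtain ⟨r, m⟩ := a
    simp only [Hgrp.one_def, Hgrp.mul_def, Hgrp.mk.injEq, pow2_zero]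
    constructor <;> ring
  inv_mul_cancel a := by
    simp only [Hgrp.inv_def, Hgrp.mul_def, Hgrp.one_def, Hgrp.mk.injEq]
    constructor <;> ring

/-- Conjugacy in `H`. -/
def conjH (x y : Hgrp) : Prop := ∃ z : Hgrp, z * x * z⁻¹ = y

/-- The element `a = (1,0)` of `H`. -/
def aH : Hgrp := ⟨1, 0⟩
/-- The element `t = (0,1)` of `H`. -/
def tH : Hgrp := ⟨0, 1⟩
lemma aH_zpow (n : ℤ) : aH ^ n = Hgrp.mk (n : Dyadic2) 0 := by
  induction n using Int.induction_on with
  | zero => simp [Hgrp.one_def]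
  | succ k ih =>
      rw [zpow_add_one, ih]
      simp only [aH, Hgrp.mul_def, Hgrp.mk.injEq, pow2_zero]
      push_cast
      constructor <;> first | ring | trivial | simp
  | pred k ih =>
      rw [zpow_sub_one, ih]
      simp only [aH, Hgrp.inv_def, Hgrp.mul_def, Hgrp.mk.injEq, pow2_zero, neg_zero]
      push_cast
      constructor <;> first | ring | trivial | simp

lemma tH_zpow (n : ℤ) : tH ^ n = Hgrp.mk 0 n := by
  induction n using Int.induction_on with
  | zero => simp [Hgrp.one_def]
  | succ k ih =>
      rw [zpow_add_one, ih]
      simp [tH, Hgrp.mul_def]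
  | pred k ih =>
      rw [zpow_sub_one, ih]
      simp only [tH, Hgrp.inv_def, Hgrp.mul_def, Hgrp.mk.injEq]
      constructor <;> ring

lemma aH_zpow_injective : Function.Injective fun n : ℤ => aH ^ n := by
  intro x y h
  simp only [aH_zpow, Hgrp.mk.injEq] at h
  have : ((x : Dyadic2) : ℚ) = ((y : Dyadic2) : ℚ) := by rw [h.1]
  simpa using this

lemma tH_zpow_injective : Function.Injective fun n : ℤ => tH ^ n := by
  intro x y h
  simp only [tH_zpow, Hgrp.mk.injEq] at h
  exact h.2

/-- The homomorphism `ℤ →* G` given by powers of `g`. -/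
def zintHom {G : Type*} [Group G] (g : G) : Multiplicative ℤ →* G where
  toFun n := g ^ (Multiplicative.toAdd n)
  map_one' := by simp
  map_mul' x y := by simp [zpow_add]

/-- For `g` with `n ↦ g ^ n` injective, `⟨g⟩ ≅ ℤ`. -/
noncomputable def zpowMulEquiv {G : Type*} [Group G] (g : G)
    (hg : Function.Injective fun n : ℤ => g ^ n) :
    Multiplicative ℤ ≃* Subgroup.zpowers g := by
  refine MulEquiv.ofBijective
    ((zintHom g).codRestrict (Subgroup.zpowers g).toSubmonoid
      (fun n => Subgroup.mem_zpowers_iff.mpr ⟨Multiplicative.toAdd n, rfl⟩)) ⟨?_, ?_⟩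
  · intro x y h
    have : g ^ (Multiplicative.toAdd x) = g ^ (Multiplicative.toAdd y) :=
      congrArg Subtype.val h
    exact hg this
  · rintro ⟨x, hx⟩
    obtain ⟨n, hn⟩ := Subgroup.mem_zpowers_iff.mp hx
    exact ⟨Multiplicative.ofAdd n, Subtype.ext hn⟩

/-- The associated isomorphism `⟨a⟩ ≅ ⟨t⟩`, `a ↦ t`, of the HNN extension defining
the Baumslag group. -/
noncomputable def φBS : Subgroup.zpowers aH ≃* Subgroup.zpowers tH :=
  (zpowMulEquiv aH aH_zpow_injective).symm.trans (zpowMulEquiv tH tH_zpow_injective)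

/-- The Baumslag group `G(1,2)`, as HNN extension of `H = BS(1,2)` with stable letter `b`,
associated subgroups `⟨a⟩` and `⟨t⟩`, and associated isomorphism `a ↦ t`. -/
noncomputable abbrev BG := HNNExtension Hgrp (Subgroup.zpowers aH) (Subgroup.zpowers tH) φBS

/-- The embedding of `H` into the Baumslag group. -/
noncomputable def ι : Hgrp →* BG := HNNExtension.of

/-- The stable letter `b` of the Baumslag group. -/
noncomputable def bBG : BG := HNNExtension.t

/-- Conjugacy in the Baumslag group `G(1,2)`. -/
def conjBG (x y : BG) : Prop := ∃ z : BG, z * x * z⁻¹ = y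


namespace StmtAux

open HNNExtension

noncomputable abbrev AA : Subgroup Hgrp := Subgroup.zpowers aH
noncomputable abbrev BB : Subgroup Hgrp := Subgroup.zpowers tH

lemma pow2_coe (m : ℤ) : ((pow2 m : Dyadic2) : ℚ) = (2:ℚ) ^ m := by
  have h1 : ((pow2 1 : Dyadic2) : ℚ) = 2 := by
    show (((Dyadic2.two ^ (1:ℤ) : Dyadic2ˣ) : Dyadic2) : ℚ) = 2
    rw [zpow_one]; rfl
  have hneg : ((pow2 (-1) : Dyadic2) : ℚ) = (2:ℚ)⁻¹ := by
    show (((Dyadic2.two ^ (-1:ℤ) : Dyadic2ˣ) : Dyadic2) : ℚ) = (2:ℚ)⁻¹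
    rw [zpow_neg_one]; rfl
  induction m using Int.induction_on with
  | zero => rw [pow2_zero]; simp
  | succ k ih =>
      have := pow2_add k 1
      rw [show ((k:ℤ)+1) = (k+1 : ℤ) from rfl] at this
      rw [this]
      push_cast [ih, h1]
      rw [zpow_add₀ (by norm_num : (2:ℚ) ≠ 0), zpow_one]
  | pred k ih =>
      have := pow2_add (-k) (-1)
      rw [show (-(k:ℤ) - 1) = (-(k:ℤ) + -1) by ring, this]
      push_cast [ih, hneg]
      rw [zpow_add₀ (by norm_num : (2:ℚ) ≠ 0), zpow_neg_one]

/-- Conjugacy invariant `r / 2^m + m` of `(r, m)`. -/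
noncomputable def invQ (g : Hgrp) : ℚ := (g.r : ℚ) / (2:ℚ) ^ g.m + g.m

lemma invKey (j : ℤ) (g : Hgrp) : invQ (tH ^ j * g) = invQ (g * aH ^ j) := by
  obtain ⟨r, m⟩ := g
  simp only [invQ, tH_zpow, aH_zpow, Hgrp.mul_def]
  push_cast [pow2_coe]
  rw [zpow_add₀ (by norm_num : (2:ℚ) ≠ 0)]
  have h2m : (2:ℚ) ^ m ≠ 0 := zpow_ne_zero _ (by norm_num)
  have h2j : (2:ℚ) ^ j ≠ 0 := zpow_ne_zero _ (by norm_num)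
  field_simp
  ring

lemma phi_apply (k : ℤ) (h : aH ^ k ∈ AA) : ((φBS ⟨aH ^ k, h⟩ : BB) : Hgrp) = tH ^ k := by
  have e1 : zpowMulEquiv aH aH_zpow_injective (Multiplicative.ofAdd k) = ⟨aH ^ k, h⟩ :=
    Subtype.ext rfl
  have e2 : (zpowMulEquiv aH aH_zpow_injective).symm ⟨aH ^ k, h⟩ = Multiplicative.ofAdd k := by
    rw [MulEquiv.symm_apply_eq, e1]
  show ((zpowMulEquiv tH tH_zpow_injective
      ((zpowMulEquiv aH aH_zpow_injective).symm ⟨aH ^ k, h⟩) : BB) : Hgrp) = tH ^ k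
  rw [e2]
  rfl

lemma aH_mem (k : ℤ) : aH ^ k ∈ AA := Subgroup.zpow_mem_zpowers _ _

/-- `b * ι (aH^k) * b⁻¹ = ι (tH^k)` in the Baumslag group. -/
lemma t_conj (k : ℤ) : bBG * ι (aH ^ k) * bBG⁻¹ = ι (tH ^ k) := by
  have := (HNNExtension.equiv_eq_conj (φ := φBS) ⟨aH ^ k, aH_mem k⟩).symm
  rwa [phi_apply] at this

lemma r1 (k : ℤ) (x : BG) :
    ι (aH ^ k) * (bBG⁻¹ * x) = bBG⁻¹ * (ι (tH ^ k) * x) := by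
  have : ι (aH ^ k) * bBG⁻¹ = bBG⁻¹ * ι (tH ^ k) := by
    rw [← t_conj k]; group
  rw [← mul_assoc, this, mul_assoc]

lemma r2 (k : ℤ) (x : BG) :
    bBG⁻¹ * (ι (tH ^ k) * (bBG * x)) = ι (aH ^ k) * x := by
  have : bBG⁻¹ * ι (tH ^ k) * bBG = ι (aH ^ k) := by
    rw [← t_conj k]; group
  rw [← this]; group

/-- Product of the letter part of a word. -/
noncomputable def Pl (L : List (ℤˣ × Hgrp)) : BG :=
  (L.map (fun x => bBG ^ (x.1:ℤ) * ι x.2)).prod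

lemma prod_eq (w : HNNExtension.NormalWord.ReducedWord Hgrp AA BB) :
    w.prod φBS = ι w.head * Pl w.toList := rfl

@[simp] lemma Pl_nil : Pl [] = 1 := rfl

@[simp] lemma Pl_cons (p : ℤˣ × Hgrp) (L : List (ℤˣ × Hgrp)) :
    Pl (p :: L) = bBG ^ (p.1:ℤ) * ι p.2 * Pl L := by
  simp [Pl]

@[simp] lemma Pl_append (L₁ L₂ : List (ℤˣ × Hgrp)) :
    Pl (L₁ ++ L₂) = Pl L₁ * Pl L₂ := by
  simp [Pl]

@[simp] lemma zpow_neg_one_units : bBG ^ (((-1:ℤˣ)):ℤ) = bBG⁻¹ := by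
  norm_num

@[simp] lemma zpow_one_units : bBG ^ (((1:ℤˣ)):ℤ) = bBG := by
  norm_num

/-- Multiplying a reduced word on the right by a group element preserves the shape. -/
lemma mulOf (w : HNNExtension.NormalWord.ReducedWord Hgrp AA BB) (h : Hgrp) :
    ∃ w₂ : HNNExtension.NormalWord.ReducedWord Hgrp AA BB,
      w₂.prod φBS = w.prod φBS * ι h ∧ w₂.toList.length = w.toList.length := by
  obtain ⟨g₀, L, ch⟩ := w
  rcases L.eq_nil_or_concat' with rfl | ⟨L', a, rfl⟩
  · exact ⟨⟨g₀ * h, [], List.isChain_nil⟩, by simp [prod_eq, map_mul, mul_assoc], rfl⟩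
  · rw [List.isChain_append] at ch
    refine ⟨⟨g₀, L' ++ [(a.1, a.2 * h)], ?_⟩, ?_, by simp⟩
    · rw [List.isChain_append]
      refine ⟨ch.1, List.isChain_singleton _, ?_⟩
      intro x hx y hy
      simp only [List.head?_cons, Option.mem_def, Option.some_inj] at hy
      subst hy
      exact ch.2.2 x hx a (by simp)
    · simp [prod_eq, map_mul, mul_assoc]

/-- The key induction: if a reduced word conjugates `b⁻¹u` to `b⁻¹v` then the
invariants agree. -/
lemma main : ∀ (n : ℕ) (w : HNNExtension.NormalWord.ReducedWord Hgrp AA BB) (u v : Hgrp),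
    w.toList.length = n →
    w.prod φBS * (bBG⁻¹ * ι u) * (w.prod φBS)⁻¹ = bBG⁻¹ * ι v →
    invQ u = invQ v := by
  intro n
  induction n using Nat.strong_induction_on with
  | _ n IH =>
    intro w u v hlen heq
    obtain ⟨g₀, L, ch⟩ := w
    rcases L.eq_nil_or_concat' with rfl | ⟨L', a, rfl⟩
    · -- base case : the conjugator is `ι g₀`
      have hz : (⟨g₀, [], ch⟩ : HNNExtension.NormalWord.ReducedWord Hgrp AA BB).prod φBS
          = ι g₀ := by simp [prod_eq]
      rw [hz] at heq
      set w₁ : HNNExtension.NormalWord.ReducedWord Hgrp AA BB :=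
        ⟨g₀, [((-1:ℤˣ), u * g₀⁻¹)], List.isChain_singleton _⟩ with hw₁
      set w₂ : HNNExtension.NormalWord.ReducedWord Hgrp AA BB :=
        ⟨1, [((-1:ℤˣ), v)], List.isChain_singleton _⟩ with hw₂
      have e1 : w₁.prod φBS = ι g₀ * (bBG⁻¹ * ι u) * (ι g₀)⁻¹ := by
        simp [prod_eq, hw₁, map_mul, mul_assoc]
      have e2 : w₂.prod φBS = bBG⁻¹ * ι v := by
        simp [prod_eq, hw₂]
      have hpr : w₁.prod φBS = w₂.prod φBS := by rw [e1, e2, heq]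
      have hco := (HNNExtension.ReducedWord.map_fst_eq_and_of_prod_eq φBS hpr).2
        (-1) (by simp [hw₁])
      have hg : g₀ ∈ AA := by
        have h1 : g₀⁻¹ ∈ AA := by simpa [hw₁, hw₂] using hco
        simpa using h1
      obtain ⟨k, hk⟩ := Subgroup.mem_zpowers_iff.mp hg
      have h3 : ι (tH ^ k) * (ι u * (ι (aH ^ k))⁻¹) = ι v := by
        apply mul_left_cancel (a := bBG⁻¹)
        rw [← heq, ← hk, ← r1]
        group
      have h4 : ι (tH ^ k * (u * (aH ^ k)⁻¹)) = ι v := by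
        rw [map_mul, map_mul, map_inv]; exact h3
      have h5 : tH ^ k * (u * (aH ^ k)⁻¹) = v := HNNExtension.of_injective (φ := φBS) h4
      rw [← h5, invKey k]
      simp
    · -- inductive step
      have hlen' : L'.length + 1 = n := by simpa using hlen
      have ch' : List.IsChain
          (fun a b => a.2 ∈ HNNExtension.toSubgroup AA BB a.1 → a.1 = b.1) L' :=
        (List.isChain_append.mp ch).1
      set M' : HNNExtension.NormalWord.ReducedWord Hgrp AA BB := ⟨g₀, L', ch'⟩ with hM'
      set z' : BG := M'.prod φBS with hz'
      have hz : (⟨g₀, L' ++ [a], ch⟩ :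
          HNNExtension.NormalWord.ReducedWord Hgrp AA BB).prod φBS
          = z' * (bBG ^ (a.1:ℤ) * ι a.2) := by
        simp [prod_eq, hz', hM', mul_assoc]
      by_cases hA : a.1 = 1 ∧ a.2 ∈ AA
      · -- case A : right pinch `t g t⁻¹`, `g ∈ A`
        obtain ⟨k, hk⟩ := Subgroup.mem_zpowers_iff.mp hA.2
        set h : Hgrp := tH ^ k * u * (aH ^ k)⁻¹ with hh
        have key : (z' * ι h) * (bBG⁻¹ * ι h) * (z' * ι h)⁻¹ = bBG⁻¹ * ι v := by
          rw [← heq, hz, hA.1, ← hk, zpow_one_units, hh]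
          rw [map_mul, map_mul, map_inv, ← t_conj k]
          group
        obtain ⟨w₂, hw₂p, hw₂l⟩ := mulOf M' h
        have hIH := IH L'.length (by omega) w₂ h v (by simpa using hw₂l)
          (by rw [hw₂p, ← hz']; exact key)
        have hu : invQ u = invQ h := by
          rw [hh, mul_assoc, invKey k, inv_mul_cancel_right]
        rw [hu, hIH]
      by_cases hB : a.1 = -1 ∧ u * a.2⁻¹ ∈ BB
      · -- case B : pinch `t⁻¹ (u gₙ⁻¹) t`, `u gₙ⁻¹ ∈ B`
        obtain ⟨j, hj⟩ := Subgroup.mem_zpowers_iff.mp hB.2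
        have hu : u = tH ^ j * a.2 := by rw [hj, inv_mul_cancel_right]
        have key : z' * (bBG⁻¹ * ι (a.2 * aH ^ j)) * z'⁻¹ = bBG⁻¹ * ι v := by
          rw [← heq, hz, hB.1, zpow_neg_one_units, hu]
          rw [map_mul, map_mul, ← t_conj j]
          group
        have hIH := IH L'.length (by omega) M' (a.2 * aH ^ j) v rfl key
        rw [hu, invKey j, hIH]
      · -- case C : no pinch at the right end
        obtain ⟨p, Lt, hpl⟩ : ∃ p Lt, L' ++ [a] = p :: Lt := by
          cases L' with
          | nil => exact ⟨a, [], rfl⟩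
          | cons b bt => exact ⟨b, bt ++ [a], rfl⟩
        have chLt : List.IsChain
            (fun a b => a.2 ∈ HNNExtension.toSubgroup AA BB a.1 → a.1 = b.1) Lt := by
          have := ch; rw [hpl] at this; exact (List.isChain_cons.mp this).2
        have hLt : Lt.length = L'.length := by
          have := congrArg List.length hpl; simpa using this.symm
        by_cases hCb : v * g₀ ∈ BB ∧ p.1 = 1
        · -- case C-b : left pinch
          obtain ⟨j, hj⟩ := Subgroup.mem_zpowers_iff.mp hCb.1
          have hv : v = tH ^ j * g₀⁻¹ := by rw [hj, mul_inv_cancel_right]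
          set Q : HNNExtension.NormalWord.ReducedWord Hgrp AA BB := ⟨p.2, Lt, chLt⟩ with hQdef
          have hQ : (⟨g₀, L' ++ [a], ch⟩ :
              HNNExtension.NormalWord.ReducedWord Hgrp AA BB).prod φBS
              = ι g₀ * bBG * Q.prod φBS := by
            simp [prod_eq, hpl, hCb.2, hQdef, mul_assoc]
          have key : Q.prod φBS * (bBG⁻¹ * ι u) * (Q.prod φBS)⁻¹
              = bBG⁻¹ * ι (g₀⁻¹ * aH ^ j) := by
            have h0 := heq
            rw [hQ, hv, map_mul, map_inv, ← t_conj j] at h0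
            rw [map_mul, map_inv]
            have h2 : Q.prod φBS * (bBG⁻¹ * ι u) * (Q.prod φBS)⁻¹
                = (ι g₀ * bBG)⁻¹ * ((ι g₀ * bBG * Q.prod φBS) * (bBG⁻¹ * ι u) *
                    (ι g₀ * bBG * Q.prod φBS)⁻¹) * (ι g₀ * bBG) := by group
            rw [h2, h0]; group
          have hIH := IH Lt.length (by omega) Q u (g₀⁻¹ * aH ^ j) rfl key
          rw [hIH, hv, invKey j]
        · -- case C-a : both sides reduced
          have chW₁ : List.IsChain
              (fun x b => x.2 ∈ HNNExtension.toSubgroup AA BB x.1 → x.1 = b.1)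
              ((L' ++ [a]) ++ [((-1:ℤˣ), u)]) := by
            rw [List.isChain_append]
            refine ⟨ch, List.isChain_singleton _, ?_⟩
            intro x hx y hy
            rw [List.getLast?_concat] at hx
            simp only [List.head?_cons, Option.mem_def, Option.some_inj] at hx hy
            subst hx
            subst hy
            intro hmem
            rcases Int.units_eq_one_or a.1 with h1 | h1
            · exact absurd ⟨h1, by rwa [h1, HNNExtension.toSubgroup_one] at hmem⟩ hA
            · simp [h1]
          have chW₂ : List.IsChain
              (fun x b => x.2 ∈ HNNExtension.toSubgroup AA BB x.1 → x.1 = b.1)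
              (((-1:ℤˣ), v * g₀) :: (L' ++ [a])) := by
            rw [List.isChain_cons]
            refine ⟨?_, ch⟩
            intro y hy
            rw [hpl] at hy
            simp only [List.head?_cons, Option.mem_def, Option.some_inj] at hy
            subst hy
            intro hmem
            rcases Int.units_eq_one_or p.1 with h1 | h1
            · exact absurd ⟨by rwa [HNNExtension.toSubgroup_neg_one] at hmem, h1⟩ hCb
            · rw [h1]
          set W₁ : HNNExtension.NormalWord.ReducedWord Hgrp AA BB :=
            ⟨g₀, (L' ++ [a]) ++ [((-1:ℤˣ), u)], chW₁⟩ with hW₁def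
          set W₂ : HNNExtension.NormalWord.ReducedWord Hgrp AA BB :=
            ⟨1, ((-1:ℤˣ), v * g₀) :: (L' ++ [a]), chW₂⟩ with hW₂def
          have hzx : (⟨g₀, L' ++ [a], ch⟩ :
              HNNExtension.NormalWord.ReducedWord Hgrp AA BB).prod φBS * (bBG⁻¹ * ι u)
              = (bBG⁻¹ * ι v) * (⟨g₀, L' ++ [a], ch⟩ :
              HNNExtension.NormalWord.ReducedWord Hgrp AA BB).prod φBS :=
            mul_inv_eq_iff_eq_mul.mp heq
          have e1 : W₁.prod φBS = (⟨g₀, L' ++ [a], ch⟩ :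
              HNNExtension.NormalWord.ReducedWord Hgrp AA BB).prod φBS * (bBG⁻¹ * ι u) := by
            simp [prod_eq, hW₁def, mul_assoc]
          have e2 : W₂.prod φBS = (bBG⁻¹ * ι v) * (⟨g₀, L' ++ [a], ch⟩ :
              HNNExtension.NormalWord.ReducedWord Hgrp AA BB).prod φBS := by
            simp [prod_eq, hW₂def, map_mul, mul_assoc]
          have hpr : W₁.prod φBS = W₂.prod φBS := by rw [e1, e2, hzx]
          have hfst := HNNExtension.ReducedWord.map_fst_eq_and_of_prod_eq φBS hpr
          have hp1 : p.1 = -1 := by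
            have h1 := congrArg List.head? hfst.1
            rw [hW₁def, hW₂def] at h1
            simp only [hpl] at h1
            simpa using h1
          have hco := hfst.2 p.1 (by rw [hW₁def]; simp [hpl])
          have hg : g₀ ∈ AA := by
            have h1 : g₀⁻¹ ∈ AA := by
              have := hco
              rw [hW₁def, hW₂def, hp1] at this
              simpa using this
            simpa using h1
          obtain ⟨k, hk⟩ := Subgroup.mem_zpowers_iff.mp hg
          set W₃ : HNNExtension.NormalWord.ReducedWord Hgrp AA BB :=
            ⟨v⁻¹ * (tH ^ k * p.2), Lt, chLt⟩ with hW₃def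
          have e3 : W₃.prod φBS = (ι v)⁻¹ * bBG * (⟨g₀, L' ++ [a], ch⟩ :
              HNNExtension.NormalWord.ReducedWord Hgrp AA BB).prod φBS := by
            rw [hW₃def, prod_eq, prod_eq]
            simp only [hpl, Pl_cons, hp1, zpow_neg_one_units]
            rw [map_mul, map_mul, map_inv, ← hk, ← t_conj k]
            group
          have key : W₃.prod φBS * (bBG⁻¹ * ι u) * (W₃.prod φBS)⁻¹ = bBG⁻¹ * ι v := by
            rw [e3]
            have h2 : ((ι v)⁻¹ * bBG * (⟨g₀, L' ++ [a], ch⟩ :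
                HNNExtension.NormalWord.ReducedWord Hgrp AA BB).prod φBS) * (bBG⁻¹ * ι u) *
                ((ι v)⁻¹ * bBG * (⟨g₀, L' ++ [a], ch⟩ :
                HNNExtension.NormalWord.ReducedWord Hgrp AA BB).prod φBS)⁻¹
                = (ι v)⁻¹ * bBG * ((⟨g₀, L' ++ [a], ch⟩ :
                HNNExtension.NormalWord.ReducedWord Hgrp AA BB).prod φBS * (bBG⁻¹ * ι u) *
                ((⟨g₀, L' ++ [a], ch⟩ :
                HNNExtension.NormalWord.ReducedWord Hgrp AA BB).prod φBS)⁻¹) *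
                bBG⁻¹ * ι v := by group
            rw [h2, heq]
            group
          exact IH Lt.length (by omega) W₃ u v rfl key

end StmtAux

lemma StmtAux.invQ_eq_iff (r s : Dyadic2) (m q : ℤ) :
    StmtAux.invQ ⟨r, m⟩ = StmtAux.invQ ⟨s, q⟩ ↔
      pow2 (q - m) * r = s + pow2 q * ((q - m : ℤ) : Dyadic2) := by
  have hcast : (pow2 (q - m) * r = s + pow2 q * ((q - m : ℤ) : Dyadic2)) ↔
      ((pow2 (q - m) * r : Dyadic2) : ℚ) = ((s + pow2 q * ((q - m : ℤ) : Dyadic2) : Dyadic2) : ℚ) :=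
    ⟨fun h => by rw [h], fun h => Subtype.ext h⟩
  rw [hcast]
  push_cast [StmtAux.pow2_coe]
  unfold StmtAux.invQ
  simp only
  have h2m : (2:ℚ) ^ m ≠ 0 := zpow_ne_zero _ (by norm_num)
  have h2q : (2:ℚ) ^ q ≠ 0 := zpow_ne_zero _ (by norm_num)
  rw [zpow_sub₀ (by norm_num : (2:ℚ) ≠ 0)]
  constructor <;> intro h
  · field_simp at h ⊢
    linarith
  · field_simp at h ⊢
    linarith

theorem stmt7 (r s : Dyadic2) (m q : ℤ) :
    conjBG (bBG⁻¹ * ι ⟨r, m⟩) (bBG⁻¹ * ι ⟨s, q⟩) ↔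
      pow2 (q - m) * r = s + pow2 q * ((q - m : ℤ) : Dyadic2) := by
  rw [← StmtAux.invQ_eq_iff]
  constructor
  · rintro ⟨z, hz⟩
    rcases HNNExtension.NormalWord.TransversalPair.nonempty Hgrp StmtAux.AA StmtAux.BB
      with ⟨d⟩
    set w : HNNExtension.NormalWord d := z • HNNExtension.NormalWord.empty with hwdef
    have hw : w.prod φBS = z := by
      rw [hwdef, HNNExtension.NormalWord.prod_smul, HNNExtension.NormalWord.prod_empty,
        mul_one]
    exact StmtAux.main w.toReducedWord.toList.length w.toReducedWord ⟨r, m⟩ ⟨s, q⟩ rfl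
      (by show w.prod φBS * _ * (w.prod φBS)⁻¹ = _; rw [hw]; exact hz)
  · intro h
    replace h := (StmtAux.invQ_eq_iff r s m q).mp h
    refine ⟨ι (aH ^ (q - m)), ?_⟩
    have hcalc : ι (aH ^ (q - m)) * (bBG⁻¹ * ι ⟨r, m⟩) * (ι (aH ^ (q - m)))⁻¹
        = bBG⁻¹ * ι (tH ^ (q - m) * ⟨r, m⟩ * (aH ^ (q - m))⁻¹) := by
      rw [map_mul, map_mul, map_inv, ← StmtAux.t_conj (q - m)]
      group
    rw [hcalc]
    congr 1
    apply congrArg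
    rw [tH_zpow, ← zpow_neg, aH_zpow]
    simp only [Hgrp.mul_def]
    have hr : (0 + pow2 (q - m) * r + pow2 (q - m + m) * ((-(q - m) : ℤ) : Dyadic2) : Dyadic2)
        = s := by
      apply Subtype.ext
      have hq : ((pow2 (q - m) * r : Dyadic2) : ℚ)
          = ((s + pow2 q * ((q - m : ℤ) : Dyadic2) : Dyadic2) : ℚ) := by rw [h]
      push_cast [StmtAux.pow2_coe] at hq ⊢
      rw [show q - m + m = q by ring]
      linear_combination hq
    exact Hgrp.ext hr (by show q - m + m + 0 = q; omega)
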